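/- Let W be uniformly convex with constant C_W and with |∇W(x)| ≤ P(|x|) for a polynomial P. There exists a constant C_Π > 0 such that for every probability measure μ (such that W*μ is finite everywhere with ∇²(W*μ) ≥ C_W·Id and center c_μ exists) and every R > 0, the Gibbs measure Π(μ)(dx) = Z(μ)⁻¹ e^{−W*μ(x)} dx satisfies Π(μ)({x : |x − c_μ| ≥ R}) ≤ C_Π e^{−C_W R}. -/

import Mathlib

open MeasureTheory Real
open scoped ENNReal

/-- If the second directional derivatives of `g` are bounded below by `CW > 0` and
`c` is a critical point of `g`, then `g` grows along rays from `c`: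
`g(c + 2w) ≥ g(c + w) + CW‖w‖²`. -/
lemma key_incr {d : ℕ} (CW : ℝ) (hCW : 0 < CW) (g : EuclideanSpace ℝ (Fin d) → ℝ)
    (hgconv : ∀ x v : EuclideanSpace ℝ (Fin d),
      CW * ‖v‖ ^ 2 ≤ fderiv ℝ (fun z => fderiv ℝ g z v) x v)
    (c : EuclideanSpace ℝ (Fin d)) (hc : gradient g c = 0)
    (w : EuclideanSpace ℝ (Fin d)) (hw : w ≠ 0) :
    g (c + w) + CW * ‖w‖ ^ 2 ≤ g (c + (2:ℝ) • w) := by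
  have hnw : 0 < ‖w‖ := norm_pos_iff.mpr hw
  have hwpos : 0 < CW * ‖w‖ ^ 2 := by positivity
  have hd : ∀ x, DifferentiableAt ℝ (fun z => fderiv ℝ g z w) x := by
    intro x
    by_contra hx
    have h := hgconv x w
    rw [fderiv_zero_of_not_differentiableAt hx] at h
    simp only [ContinuousLinearMap.zero_apply] at h
    linarith
  have hline : ∀ t : ℝ, HasDerivAt (fun s : ℝ => c + s • w) w t := by
    intro t
    simpa using ((hasDerivAt_id t).smul_const w).const_add c
  set φ : ℝ → ℝ := fun t => fderiv ℝ g (c + t • w) w with hφdef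
  have hφ : ∀ t : ℝ, HasDerivAt φ
      (fderiv ℝ (fun z => fderiv ℝ g z w) (c + t • w) w) t := by
    intro t
    exact ((hd _).hasFDerivAt.comp_hasDerivAt t (hline t))
  have hφ0 : φ 0 = 0 := by
    have hf0 : fderiv ℝ g c = 0 := by
      have h := congrArg (InnerProductSpace.toDual ℝ (EuclideanSpace ℝ (Fin d))) hc
      simpa [gradient] using h
    simp [hφdef, hf0]
  have hφlb : ∀ t : ℝ, 0 ≤ t → CW * ‖w‖ ^ 2 * t ≤ φ t := by
    intro t ht
    have h := (convex_univ (𝕜 := ℝ) (E := ℝ)).mul_sub_le_image_sub_of_le_deriv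
      (f := φ) (fun x _ => (hφ x).continuousAt.continuousWithinAt)
      (fun x _ => ((hφ x).differentiableAt).differentiableWithinAt)
      (C := CW * ‖w‖ ^ 2)
      (fun x _ => by rw [(hφ x).deriv]; exact hgconv _ w)
      0 trivial t trivial ht
    simpa [hφ0] using h
  have hgd : ∀ t : ℝ, 0 < t → DifferentiableAt ℝ g (c + t • w) := by
    intro t ht
    by_contra hx
    have h1 := hφlb t ht.le
    have h2 : φ t = 0 := by
      simp [hφdef, fderiv_zero_of_not_differentiableAt hx]
    rw [h2] at h1
    nlinarith
  set ψ : ℝ → ℝ := fun t => g (c + t • w) with hψdef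
  have hψ : ∀ t : ℝ, 0 < t → HasDerivAt ψ (φ t) t := by
    intro t ht
    exact ((hgd t ht).hasFDerivAt.comp_hasDerivAt t (hline t))
  have key := (convex_Icc (1:ℝ) 2).mul_sub_le_image_sub_of_le_deriv (f := ψ)
    (fun x hx => (hψ x (by linarith [hx.1])).continuousAt.continuousWithinAt)
    (by
      rw [interior_Icc]
      exact fun x hx => ((hψ x (by linarith [hx.1])).differentiableAt).differentiableWithinAt)
    (C := CW * ‖w‖ ^ 2)
    (by
      rw [interior_Icc]
      intro x hx
      rw [(hψ x (by linarith [hx.1])).deriv]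
      have := hφlb x (by linarith [hx.1])
      nlinarith [hx.1, hwpos])
    1 (by norm_num) 2 (by norm_num) (by norm_num)
  have h1 : ψ 1 = g (c + w) := by simp [hψdef]
  have h2 : ψ 2 = g (c + (2:ℝ) • w) := rfl
  rw [h1, h2] at key
  linarith

/-- Scaling identity for the Lebesgue integral under `x ↦ (x + c)/2`. -/
lemma lint_scale {d : ℕ} (c : EuclideanSpace ℝ (Fin d)) (F : EuclideanSpace ℝ (Fin d) → ℝ≥0∞)
    (hF : AEMeasurable F (volume : Measure (EuclideanSpace ℝ (Fin d)))) :
    ∫⁻ x, F ((2⁻¹:ℝ) • (x + c)) = ENNReal.ofReal (2 ^ d) * ∫⁻ x, F x := by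
  have h2 : ((2:ℝ)⁻¹) ≠ 0 := by norm_num
  have hmap : Measure.map (((2:ℝ)⁻¹) • ·) (volume : Measure (EuclideanSpace ℝ (Fin d)))
      = ENNReal.ofReal (2 ^ d) • volume := by
    rw [Measure.map_addHaar_smul volume h2]
    congr 1
    rw [finrank_euclideanSpace_fin]
    rw [abs_of_pos (by positivity), ← inv_pow, inv_inv]
  have step1 : ∫⁻ x, F ((2⁻¹:ℝ) • (x + c)) = ∫⁻ x, F ((2⁻¹:ℝ) • x) := by
    exact lintegral_add_right_eq_self (fun x => F ((2⁻¹:ℝ) • x)) c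
  rw [step1]
  have hFmap : AEMeasurable F (Measure.map (((2:ℝ)⁻¹) • ·) (volume : Measure (EuclideanSpace ℝ (Fin d)))) := by
    rw [hmap]; exact hF.smul_measure _
  have step2 : ∫⁻ x, F ((2⁻¹:ℝ) • x) = ∫⁻ a, F a ∂(Measure.map (((2:ℝ)⁻¹) • ·) (volume : Measure (EuclideanSpace ℝ (Fin d)))) :=
    (lintegral_map' hFmap (measurable_const_smul _).aemeasurable).symm
  rw [step2, hmap, lintegral_smul_measure, smul_eq_mul]

theorem stmt4 (d : ℕ) (CW : ℝ) (hCW : 0 < CW) (P : ℝ → ℝ)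
    (W : EuclideanSpace ℝ (Fin d) → ℝ) (hW : ContDiff ℝ 2 W)
    (hWconv : ∀ x v : EuclideanSpace ℝ (Fin d),
      CW * ‖v‖ ^ 2 ≤ fderiv ℝ (fun z => fderiv ℝ W z v) x v)
    (hWgrad : ∀ x : EuclideanSpace ℝ (Fin d), ‖gradient W x‖ ≤ P ‖x‖) :
    ∃ Cpi > (0:ℝ), ∀ μ : Measure (EuclideanSpace ℝ (Fin d)), IsProbabilityMeasure μ →
      ∀ g : EuclideanSpace ℝ (Fin d) → ℝ,
      (∀ x, g x = ∫ y, W (x - y) ∂μ) →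
      (∀ x, Integrable (fun y => W (x - y)) μ) →
      (∀ x v : EuclideanSpace ℝ (Fin d),
        CW * ‖v‖ ^ 2 ≤ fderiv ℝ (fun z => fderiv ℝ g z v) x v) →
      Integrable (fun x => Real.exp (-g x)) →
      ∀ c : EuclideanSpace ℝ (Fin d), gradient g c = 0 →
      ∀ Z : ℝ, Z = ∫ x, Real.exp (-g x) →
      ∀ R > (0:ℝ),
        (volume.withDensity (fun x => ENNReal.ofReal (Real.exp (-g x) / Z)))
            {x | R ≤ ‖x - c‖} ≤ ENNReal.ofReal (Cpi * Real.exp (-CW * R)) := by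
  refine ⟨2 ^ d * Real.exp (4 * CW), by positivity, ?_⟩
  intro μ hμ g hgdef hgint hgconv hInt c hc Z hZ R hR
  set S : Set (EuclideanSpace ℝ (Fin d)) := {x | R ≤ ‖x - c‖} with hS
  have hSmeas : MeasurableSet S :=
    (isClosed_le continuous_const ((continuous_id.sub continuous_const).norm)).measurableSet
  have hZpos : 0 < Z := by
    rw [hZ, integral_pos_iff_support_of_nonneg (fun x => (Real.exp_pos _).le) hInt]
    have hsupp : Function.support (fun x : EuclideanSpace ℝ (Fin d) => Real.exp (-g x)) = Set.univ := by
      ext x; simp [Function.support, (Real.exp_pos (-g x)).ne']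
    rw [hsupp]
    exact isOpen_univ.measure_pos volume Set.univ_nonempty
  have hZ0 : ENNReal.ofReal Z ≠ 0 := (ENNReal.ofReal_pos.mpr hZpos).ne'
  have hZtop : ENNReal.ofReal Z ≠ ⊤ := ENNReal.ofReal_ne_top
  set F : EuclideanSpace ℝ (Fin d) → ℝ≥0∞ := fun x => ENNReal.ofReal (Real.exp (-g x)) with hF
  have hFae : AEMeasurable F volume := hInt.aemeasurable.ennreal_ofReal
  have hFZ : ∫⁻ x, F x = ENNReal.ofReal Z := by
    rw [hZ]
    exact (ofReal_integral_eq_lintegral_ofReal hInt (ae_of_all _ fun x => (Real.exp_pos _).le)).symm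
  have hwd : (volume.withDensity (fun x => ENNReal.ofReal (Real.exp (-g x) / Z))) S
      = (∫⁻ x in S, F x) / ENNReal.ofReal Z := by
    rw [withDensity_apply _ hSmeas]
    have hpt : ∀ x : EuclideanSpace ℝ (Fin d),
        ENNReal.ofReal (Real.exp (-g x) / Z) = F x * (ENNReal.ofReal Z)⁻¹ := by
      intro x
      rw [ENNReal.ofReal_div_of_pos hZpos, div_eq_mul_inv]
    simp_rw [hpt]
    rw [lintegral_mul_const'' _ hFae.restrict, div_eq_mul_inv]
  rw [hwd]
  rcases le_or_gt 4 R with hR4 | hR4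
  · -- R ≥ 4
    set K : ℝ := Real.exp (-(CW * R ^ 2 / 4)) with hK
    have hpoint : ∀ x ∈ S, F x ≤ ENNReal.ofReal K * F ((2⁻¹:ℝ) • (x + c)) := by
      intro x hx
      have hxS : R ≤ ‖x - c‖ := hx
      set w : EuclideanSpace ℝ (Fin d) := (2⁻¹:ℝ) • (x - c) with hwdef
      have hnw : ‖w‖ = 2⁻¹ * ‖x - c‖ := by
        rw [hwdef, norm_smul]; norm_num
      have hwne : w ≠ 0 := by
        have : 0 < ‖w‖ := by rw [hnw]; nlinarith
        exact norm_pos_iff.mp this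
      have hkey := key_incr CW hCW g hgconv c hc w hwne
      have h2w : c + (2:ℝ) • w = x := by rw [hwdef]; module
      have h1w : c + w = (2⁻¹:ℝ) • (x + c) := by rw [hwdef]; module
      rw [h2w, h1w] at hkey
      have hG : CW * R ^ 2 / 4 ≤ CW * ‖w‖ ^ 2 := by
        rw [hnw]
        have h' : R ^ 2 ≤ ‖x - c‖ ^ 2 := by nlinarith
        nlinarith [hCW, h']
      have hexp : Real.exp (-g x) ≤ K * Real.exp (-g ((2⁻¹:ℝ) • (x + c))) := by
        rw [hK, ← Real.exp_add]
        apply Real.exp_le_exp.mpr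
        linarith
      calc F x ≤ ENNReal.ofReal (K * Real.exp (-g ((2⁻¹:ℝ) • (x + c)))) :=
            ENNReal.ofReal_le_ofReal hexp
        _ = ENNReal.ofReal K * F ((2⁻¹:ℝ) • (x + c)) := ENNReal.ofReal_mul (by positivity)
    have hq : Measure.QuasiMeasurePreserving (fun x : EuclideanSpace ℝ (Fin d) => (2⁻¹:ℝ) • (x + c))
        volume volume := by
      have hq1 : MeasurePreserving (fun x : EuclideanSpace ℝ (Fin d) => x + c) volume volume :=
        measurePreserving_add_right volume c
      have hq2 := Measure.quasiMeasurePreserving_smul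
        (volume : Measure (EuclideanSpace ℝ (Fin d))) (by norm_num : ((2:ℝ)⁻¹) ≠ 0)
      exact hq2.comp hq1.quasiMeasurePreserving
    have hmae : AEMeasurable (fun x => F ((2⁻¹:ℝ) • (x + c))) volume :=
      hFae.comp_quasiMeasurePreserving hq
    have chain : ∫⁻ x in S, F x ≤ ENNReal.ofReal K * (ENNReal.ofReal (2 ^ d) * ENNReal.ofReal Z) := by
      calc ∫⁻ x in S, F x ≤ ∫⁻ x in S, ENNReal.ofReal K * F ((2⁻¹:ℝ) • (x + c)) :=
            setLIntegral_mono_ae (hmae.const_mul _).restrict (ae_of_all _ hpoint)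
        _ = ENNReal.ofReal K * ∫⁻ x in S, F ((2⁻¹:ℝ) • (x + c)) :=
            lintegral_const_mul'' _ hmae.restrict
        _ ≤ ENNReal.ofReal K * ∫⁻ x, F ((2⁻¹:ℝ) • (x + c)) :=
            mul_le_mul_right (setLIntegral_le_lintegral _ _) _
        _ = ENNReal.ofReal K * (ENNReal.ofReal (2 ^ d) * ∫⁻ x, F x) := by
            rw [lint_scale c F hFae]
        _ = ENNReal.ofReal K * (ENNReal.ofReal (2 ^ d) * ENNReal.ofReal Z) := by rw [hFZ]
    refine le_trans (ENNReal.div_le_div_right chain _) ?_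
    have hcalc : ENNReal.ofReal K * (ENNReal.ofReal (2 ^ d) * ENNReal.ofReal Z) / ENNReal.ofReal Z
        = ENNReal.ofReal K * ENNReal.ofReal (2 ^ d) := by
      rw [← mul_assoc, mul_div_assoc, ENNReal.div_self hZ0 hZtop, mul_one]
    rw [hcalc, ← ENNReal.ofReal_mul (by positivity)]
    apply ENNReal.ofReal_le_ofReal
    have hKle : K ≤ Real.exp (-CW * R) := by
      apply Real.exp_le_exp.mpr
      nlinarith [mul_nonneg (mul_nonneg hCW.le hR.le) (by linarith : (0:ℝ) ≤ R - 4)]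
    have h1 : (0:ℝ) < 2 ^ d := by positivity
    have h2 : (1:ℝ) ≤ Real.exp (4 * CW) := Real.one_le_exp (by positivity)
    calc K * 2 ^ d ≤ Real.exp (-CW * R) * 2 ^ d := mul_le_mul_of_nonneg_right hKle h1.le
      _ ≤ (Real.exp (-CW * R) * 2 ^ d) * Real.exp (4 * CW) :=
          le_mul_of_one_le_right (by positivity) h2
      _ = 2 ^ d * Real.exp (4 * CW) * Real.exp (-CW * R) := by ring
  · -- R < 4
    have hnum : ∫⁻ x in S, F x ≤ ENNReal.ofReal Z := by
      rw [← hFZ]; exact setLIntegral_le_lintegral _ _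
    refine le_trans (ENNReal.div_le_div_right hnum _) ?_
    rw [ENNReal.div_self hZ0 hZtop]
    rw [← ENNReal.ofReal_one]
    apply ENNReal.ofReal_le_ofReal
    have h1 : (1:ℝ) ≤ 2 ^ d := one_le_pow₀ (by norm_num)
    have h2 : (1:ℝ) ≤ Real.exp (4 * CW) * Real.exp (-CW * R) := by
      rw [← Real.exp_add]
      apply Real.one_le_exp
      nlinarith
    nlinarith
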